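/- Let c ∈ (0,1), let N ∈ ℕ with N ≥ 2, let ε be a real number with 0 ≤ ε ≤ 3/7, set θ := 1/2 − 7ε/6, and let m be a positive real number. Suppose that for every real A > 0, one has (1/N)·(1 − √(1 − c^{14Am})) ≤ 2·exp(−A·θ²). Then m ≥ θ² / (−7·log(c²)). -/

import Mathlib

theorem stmt_13 (c : ℝ) (hc : c ∈ Set.Ioo (0 : ℝ) 1)
    (N : ℕ) (hN : 2 ≤ N) (ε : ℝ) (hε0 : 0 ≤ ε) (hε1 : ε ≤ 3 / 7)
    (θ : ℝ) (hθ : θ = 1 / 2 - 7 * ε / 6) (m : ℝ) (hm : 0 < m)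
    (h : ∀ A : ℝ, 0 < A →
      1 / (N : ℝ) * (1 - Real.sqrt (1 - c ^ (14 * A * m)))
        ≤ 2 * Real.exp (-A * θ ^ 2)) :
    θ ^ 2 / (-7 * Real.log (c ^ 2)) ≤ m := by
  obtain ⟨hc0, hc1⟩ := hc
  set L := Real.log c with hL
  have hLneg : L < 0 := Real.log_neg hc0 hc1
  have hNpos : (0 : ℝ) < N := by positivity
  -- key: for all A > 0, A * (θ^2 + 14*m*L) ≤ log (4*N)
  have key : ∀ A : ℝ, 0 < A → A * (θ ^ 2 + 14 * m * L) ≤ Real.log (4 * N) := by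
    intro A hA
    have hx : c ^ (14 * A * m) = Real.exp (14 * A * m * L) := by
      rw [Real.rpow_def_of_pos hc0, hL]; ring_nf
    set x := Real.exp (14 * A * m * L) with hxdef
    have hxpos : 0 < x := Real.exp_pos _
    have hx1 : x < 1 := by
      rw [hxdef, Real.exp_lt_one_iff]
      have : 0 < 14 * A * m := by positivity
      nlinarith
    -- 1 - sqrt (1 - x) ≥ x / 2
    have hsqrt : Real.sqrt (1 - x) ≤ 1 - x / 2 := by
      have h1 : Real.sqrt (1 - x) ≤ Real.sqrt ((1 - x / 2) ^ 2) := by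
        apply Real.sqrt_le_sqrt; nlinarith
      rwa [Real.sqrt_sq (by nlinarith)] at h1
    have hA' := h A hA
    rw [hx] at hA'
    have h2 : x / (2 * N) ≤ 2 * Real.exp (-A * θ ^ 2) := by
      have heq : 1 / (N:ℝ) * (1 - Real.sqrt (1 - x)) * (2 * N) = (1 - Real.sqrt (1 - x)) * 2 := by
        field_simp
      have : x / (2 * N) ≤ 1 / (N : ℝ) * (1 - Real.sqrt (1 - x)) := by
        rw [div_le_iff₀ (by positivity), heq]
        nlinarith
      linarith
    have h3 : x ≤ 4 * N * Real.exp (-A * θ ^ 2) := by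
      rw [div_le_iff₀ (by positivity)] at h2
      nlinarith [Real.exp_pos (-A * θ ^ 2)]
    have h4 : x ≤ Real.exp (Real.log (4 * N) + (-A * θ ^ 2)) := by
      rw [Real.exp_add, Real.exp_log (by positivity)]; exact h3
    have h5 : 14 * A * m * L ≤ Real.log (4 * N) + (-A * θ ^ 2) := by
      have h4' : Real.exp (14 * A * m * L) ≤ Real.exp (Real.log (4 * N) + (-A * θ ^ 2)) := h4
      exact Real.exp_le_exp.mp h4' 
    nlinarith
  -- deduce θ^2 + 14*m*L ≤ 0
  have hsum : θ ^ 2 + 14 * m * L ≤ 0 := by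
    by_contra hpos
    push_neg at hpos
    set t := θ ^ 2 + 14 * m * L with ht
    set A := (|Real.log (4 * N)| + 1) / t with hAdef
    have hApos : 0 < A := by positivity
    have := key A hApos
    rw [hAdef, div_mul_cancel₀ _ (ne_of_gt hpos)] at this
    have := abs_nonneg (Real.log (4 * N))
    have := le_abs_self (Real.log (4 * N))
    linarith
  have hlogsq : Real.log (c ^ 2) = 2 * L := by
    rw [Real.log_pow]; push_cast; ring
  rw [hlogsq, div_le_iff₀ (by nlinarith)]
  nlinarith
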